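/- Let {p_k, ρ^k_ABC}_{k=1}^K be an ensemble of states on H_A ⊗ H_B ⊗ H_C with T^(a)(ρ^k_ABC) = 0 for every k. If the marginal states {ρ_B^k}_k are mutually orthogonal and the marginal states {ρ_C^k}_k are mutually orthogonal, then the state ρ_ABC = ∑_{k=1}^K p_k ρ^k_ABC satisfies T^(a)(ρ_ABC) = 0. -/

import Mathlib

open Matrix Kronecker
open scoped Classical ComplexOrder

noncomputable section

/-- A state (density operator): positive semidefinite with unit trace. -/
def IsState {n : Type*} [Fintype n] (ρ : Matrix n n ℂ) : Prop :=
  ρ.PosSemidef ∧ ρ.trace = 1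

/-- A unit vector. -/
def UnitVec {n : Type*} [Fintype n] (ψ : n → ℂ) : Prop :=
  ∑ i, Complex.normSq (ψ i) = 1

/-- The rank-one projection `|ψ⟩⟨ψ|`. -/
def pureSt {n : Type*} (ψ : n → ℂ) : Matrix n n ℂ :=
  Matrix.vecMulVec ψ (star ψ)

/-- Von Neumann entropy `S(ρ) = -Tr(ρ log ρ)`, computed via the eigenvalues of a
Hermitian matrix (with the convention `0 log 0 = 0`, and junk value `0` on
non-Hermitian input). -/
def entropy {n : Type*} [Fintype n] [DecidableEq n] (ρ : Matrix n n ℂ) : ℝ :=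
  if h : ρ.IsHermitian then -∑ i, h.eigenvalues i * Real.log (h.eigenvalues i) else 0

/-- Partial trace over the second tensor factor. -/
def ptraceRight {X Y : Type*} [Fintype Y] (ρ : Matrix (X × Y) (X × Y) ℂ) :
    Matrix X X ℂ :=
  fun x x' => ∑ y, ρ (x, y) (x', y)

/-- Partial trace over the first tensor factor. -/
def ptraceLeft {X Y : Type*} [Fintype X] (ρ : Matrix (X × Y) (X × Y) ℂ) :
    Matrix Y Y ℂ :=
  fun y y' => ∑ x, ρ (x, y) (x, y')

/-- Marginal `ρ_AB` of a tripartite state. -/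
def margAB {A B C : Type*} [Fintype C] (ρ : Matrix (A × B × C) (A × B × C) ℂ) :
    Matrix (A × B) (A × B) ℂ :=
  fun x y => ∑ c, ρ (x.1, x.2, c) (y.1, y.2, c)

/-- Marginal `ρ_AC` of a tripartite state. -/
def margAC {A B C : Type*} [Fintype B] (ρ : Matrix (A × B × C) (A × B × C) ℂ) :
    Matrix (A × C) (A × C) ℂ :=
  fun x y => ∑ b, ρ (x.1, b, x.2) (y.1, b, y.2)

/-- Marginal `ρ_BC` of a tripartite state. -/
def margBC {A B C : Type*} [Fintype A] (ρ : Matrix (A × B × C) (A × B × C) ℂ) :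
    Matrix (B × C) (B × C) ℂ :=
  fun x y => ∑ a, ρ (a, x.1, x.2) (a, y.1, y.2)

/-- Marginal `ρ_A` of a tripartite state. -/
def margA {A B C : Type*} [Fintype B] [Fintype C]
    (ρ : Matrix (A × B × C) (A × B × C) ℂ) : Matrix A A ℂ :=
  fun a a' => ∑ b, ∑ c, ρ (a, b, c) (a', b, c)

/-- Marginal `ρ_B` of a tripartite state. -/
def margB {A B C : Type*} [Fintype A] [Fintype C]
    (ρ : Matrix (A × B × C) (A × B × C) ℂ) : Matrix B B ℂ :=
  fun b b' => ∑ a, ∑ c, ρ (a, b, c) (a, b', c)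

/-- Marginal `ρ_C` of a tripartite state. -/
def margC {A B C : Type*} [Fintype A] [Fintype B]
    (ρ : Matrix (A × B × C) (A × B × C) ℂ) : Matrix C C ℂ :=
  fun c c' => ∑ a, ∑ b, ρ (a, b, c) (a, b, c')

/-- `T^(a)(ρ_ABC) = S(ρ_AB) + S(ρ_AC) − S(ρ_B) − S(ρ_C)`, the deviation from
saturation of strong subadditivity. -/
def Ta {A B C : Type*} [Fintype A] [Fintype B] [Fintype C]
    [DecidableEq A] [DecidableEq B] [DecidableEq C]
    (ρ : Matrix (A × B × C) (A × B × C) ℂ) : ℝ :=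
  entropy (margAB ρ) + entropy (margAC ρ) - entropy (margB ρ) - entropy (margC ρ)

/-- Entanglement of formation of a bipartite state (infimum over pure-state
ensembles realizing `ρ`). -/
def eof {X Y : Type*} [Fintype X] [Fintype Y] [DecidableEq X]
    (ρ : Matrix (X × Y) (X × Y) ℂ) : ℝ :=
  sInf { e : ℝ | ∃ (K : ℕ) (p : Fin K → ℝ) (ψ : Fin K → X × Y → ℂ),
    (∀ i, 0 ≤ p i) ∧ (∀ i, UnitVec (ψ i)) ∧
    ρ = ∑ i, p i • pureSt (ψ i) ∧
    e = ∑ i, p i * entropy (ptraceRight (pureSt (ψ i))) }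

/-- Probability of obtaining the outcome of the rank-one projector `|u⟩⟨u|`
measured on the second subsystem. -/
def measProb {X Y : Type*} [Fintype X] [Fintype Y] [DecidableEq X]
    (ρ : Matrix (X × Y) (X × Y) ℂ) (u : Y → ℂ) : ℝ :=
  ((((1 : Matrix X X ℂ) ⊗ₖ pureSt u) * ρ).trace).re

/-- Post-measurement state of the first subsystem after obtaining the outcome
of the rank-one projector `|u⟩⟨u|` on the second subsystem. -/
def postState {X Y : Type*} [Fintype X] [Fintype Y] [DecidableEq X]
    (ρ : Matrix (X × Y) (X × Y) ℂ) (u : Y → ℂ) : Matrix X X ℂ :=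
  (measProb ρ u)⁻¹ •
    ptraceRight (((1 : Matrix X X ℂ) ⊗ₖ pureSt u) * ρ * ((1 : Matrix X X ℂ) ⊗ₖ pureSt u))

/-- Classical correlation `J^(Y)(ρ_XY)`: supremum over complete families of
mutually orthogonal rank-one projectors on `H_Y` (parametrized by orthonormal
bases `v` of `H_Y`) of `S(ρ_X) − ∑ᵢ pᵢ S(ρ_{X|i})`. -/
def classicalCorr {X Y : Type*} [Fintype X] [Fintype Y] [DecidableEq X] [DecidableEq Y]
    (ρ : Matrix (X × Y) (X × Y) ℂ) : ℝ :=
  sSup { r : ℝ | ∃ v : Y → Y → ℂ,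
    (∀ i j, star (v i) ⬝ᵥ v j = if i = j then 1 else 0) ∧
    r = entropy (ptraceRight ρ) - ∑ i, measProb ρ (v i) * entropy (postState ρ (v i)) }

/-- Quantum mutual information `I(ρ_XY) = S(ρ_X) + S(ρ_Y) − S(ρ_XY)`. -/
def mutualInfo {X Y : Type*} [Fintype X] [Fintype Y] [DecidableEq X] [DecidableEq Y]
    (ρ : Matrix (X × Y) (X × Y) ℂ) : ℝ :=
  entropy (ptraceRight ρ) + entropy (ptraceLeft ρ) - entropy ρ

/-- Quantum discord `D^(Y)(ρ_XY)` with measurement on the second subsystem. -/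
def discord {X Y : Type*} [Fintype X] [Fintype Y] [DecidableEq X] [DecidableEq Y]
    (ρ : Matrix (X × Y) (X × Y) ℂ) : ℝ :=
  mutualInfo ρ - classicalCorr ρ

/-- Quantum conditional entropy `S(X|Y) = S(ρ_XY) − S(ρ_Y)`. -/
def condEnt {X Y : Type*} [Fintype X] [Fintype Y] [DecidableEq X] [DecidableEq Y]
    (ρ : Matrix (X × Y) (X × Y) ℂ) : ℝ :=
  entropy ρ - entropy (ptraceLeft ρ)

/-- Marginal `ρ_{AB̃}` (`B̃ = BE`) of a four-partite state on `A × B × C × E`. -/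
def margABE {A B C E : Type*} [Fintype C]
    (Ψ : Matrix (A × B × C × E) (A × B × C × E) ℂ) :
    Matrix (A × B × E) (A × B × E) ℂ :=
  fun x y => ∑ c, Ψ (x.1, x.2.1, c, x.2.2) (y.1, y.2.1, c, y.2.2)

/-- Marginal `ρ_{AC̃}` (`C̃ = CE`) of a four-partite state on `A × B × C × E`. -/
def margACE {A B C E : Type*} [Fintype B]
    (Ψ : Matrix (A × B × C × E) (A × B × C × E) ℂ) :
    Matrix (A × C × E) (A × C × E) ℂ :=
  fun x y => ∑ b, Ψ (x.1, b, x.2.1, x.2.2) (y.1, b, y.2.1, y.2.2)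

/-- Marginal `ρ_ABC` of a four-partite state on `A × B × C × E` (trace out `E`). -/
def margABC {A B C E : Type*} [Fintype E]
    (Ψ : Matrix (A × B × C × E) (A × B × C × E) ℂ) :
    Matrix (A × B × C) (A × B × C) ℂ :=
  fun x y => ∑ e, Ψ (x.1, x.2.1, x.2.2, e) (y.1, y.2.1, y.2.2, e)

/-- Reordering `(A ⊗ (B^L ⊗ C^L)) ⊗ (B^R ⊗ C^R) ≃ A ⊗ (B^L ⊗ B^R) ⊗ (C^L ⊗ C^R)`. -/
def reindexYZ (A BL BR CL CR : Type*) :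
    (A × (BL × CL)) × (BR × CR) ≃ A × (BL × BR) × (CL × CR) where
  toFun x := (x.1.1, (x.1.2.1, x.2.1), (x.1.2.2, x.2.2))
  invFun x := ((x.1, (x.2.1.1, x.2.2.1)), (x.2.1.2, x.2.2.2))
  left_inv := by rintro ⟨⟨a, bl, cl⟩, br, cr⟩; rfl
  right_inv := by rintro ⟨a, ⟨bl, br⟩, cl, cr⟩; rfl



section MomentLemma

open scoped unitInterval


lemma poly_sum_aux {κ : Type*} [Fintype κ] (c : κ → ℝ) (P : Polynomial ℝ) :
    ∑ i : κ, P.eval (c i)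
      = ∑ m ∈ Finset.range (P.natDegree + 1), P.coeff m * ∑ i : κ, c i ^ m := by
  simp_rw [Polynomial.eval_eq_sum_range, Finset.mul_sum]
  rw [Finset.sum_comm]

lemma poly_sum_eq {ι ι' : Type*} [Fintype ι] [Fintype ι']
    (a : ι → ℝ) (b : ι' → ℝ)
    (hpow : ∀ m : ℕ, 1 ≤ m → ∑ i, a i ^ m = ∑ j, b j ^ m)
    (P : Polynomial ℝ) (hP0 : P.eval 0 = 0) :
    ∑ i, P.eval (a i) = ∑ j, P.eval (b j) := by
  rw [poly_sum_aux a P, poly_sum_aux b P]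
  refine Finset.sum_congr rfl fun m _ => ?_
  rcases Nat.eq_zero_or_pos m with hm | hm
  · subst hm
    have : P.coeff 0 = 0 := by rwa [Polynomial.coeff_zero_eq_eval_zero]
    simp [this]
  · rw [hpow m hm]

lemma sum_cont_eq_of_powersum {ι ι' : Type*} [Fintype ι] [Fintype ι']
    (a : ι → ℝ) (b : ι' → ℝ) (ha : ∀ i, 0 ≤ a i) (hb : ∀ j, 0 ≤ b j)
    (hpow : ∀ m : ℕ, 1 ≤ m → ∑ i, a i ^ m = ∑ j, b j ^ m)
    (f : ℝ → ℝ) (hf : Continuous f) (hf0 : f 0 = 0) :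
    ∑ i, f (a i) = ∑ j, f (b j) := by
  set M : ℝ := (∑ i, a i) + 1 with hM
  have hMpos : 0 < M := by
    have : 0 ≤ ∑ i, a i := Finset.sum_nonneg fun i _ => ha i
    linarith
  have hab : ∑ i, a i = ∑ j, b j := by simpa using hpow 1 le_rfl
  have haM : ∀ i, a i ≤ M := fun i => by
    have : a i ≤ ∑ i, a i := Finset.single_le_sum (fun i _ => ha i) (Finset.mem_univ i)
    linarith
  have hbM : ∀ j, b j ≤ M := fun j => by
    have : b j ≤ ∑ j, b j := Finset.single_le_sum (fun j _ => hb j) (Finset.mem_univ j)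
    rw [← hab] at this; linarith
  -- scaled families in the unit interval
  have hmem : ∀ (c : ℝ), 0 ≤ c → c ≤ M → c / M ∈ I := fun c h1 h2 =>
    ⟨div_nonneg h1 hMpos.le, (div_le_one hMpos).2 h2⟩
  set a' : ι → I := fun i => ⟨a i / M, hmem _ (ha i) (haM i)⟩ with ha'
  set b' : ι' → I := fun j => ⟨b j / M, hmem _ (hb j) (hbM j)⟩ with hb'
  set g : C(I, ℝ) := ⟨fun x => f (M * (x : ℝ)), by fun_prop⟩ with hg
  have hga : ∀ i, f (a i) = g (a' i) := fun i => by
    simp only [hg, ContinuousMap.coe_mk, ha']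
    rw [mul_div_cancel₀ _ hMpos.ne']
  have hgb : ∀ j, f (b j) = g (b' j) := fun j => by
    simp only [hg, ContinuousMap.coe_mk, hb']
    rw [mul_div_cancel₀ _ hMpos.ne']
  -- scaled power sums
  have hpow' : ∀ m : ℕ, 1 ≤ m → ∑ i, ((a' i : ℝ)) ^ m = ∑ j, ((b' j : ℝ)) ^ m := by
    intro m hm
    simp only [ha', hb', div_pow]
    rw [← Finset.sum_div, ← Finset.sum_div, hpow m hm]
  -- the Bernstein approximations agree on the two families
  have hbern : ∀ n : ℕ,
      ∑ i, (bernsteinApproximation n g) (a' i) = ∑ j, (bernsteinApproximation n g) (b' j) := by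
    intro n
    set P : Polynomial ℝ :=
      ∑ k : Fin (n + 1), Polynomial.C (g (bernstein.z k)) * bernsteinPolynomial ℝ n k with hP
    have hPeval : ∀ x : I, (bernsteinApproximation n g) x = P.eval (x : ℝ) := by
      intro x
      simp only [bernsteinApproximation, hP, ContinuousMap.sum_apply, Polynomial.eval_finset_sum,
        Polynomial.eval_mul, Polynomial.eval_C, ContinuousMap.smul_apply, smul_eq_mul]
      refine Finset.sum_congr rfl fun k _ => ?_
      rw [ContinuousMap.mul_apply, ContinuousMap.const_apply, mul_comm]
      rfl
    have hP0 : P.eval 0 = 0 := by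
      simp only [hP, Polynomial.eval_finset_sum, Polynomial.eval_mul, Polynomial.eval_C,
        bernsteinPolynomial.eval_at_0]
      rw [Finset.sum_eq_single (0 : Fin (n + 1))]
      · have : (bernstein.z (0 : Fin (n + 1)) : ℝ) = 0 := by simp [bernstein.z]
        have h0 : bernstein.z (0 : Fin (n + 1)) = (⟨0, by norm_num⟩ : I) := Subtype.ext this
        simp [h0, hg, hf0]
      · intro k _ hk
        have : (k : ℕ) ≠ 0 := fun h => hk (by ext; simpa using h)
        simp [this]
      · simp
    simp_rw [hPeval]
    exact poly_sum_eq _ _ hpow' P hP0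
  -- pass to the limit
  have hdist : ∀ n : ℕ, |∑ i, f (a i) - ∑ j, f (b j)| ≤
      (Fintype.card ι + Fintype.card ι') * dist (bernsteinApproximation n g) g := by
    intro n
    have h1 : |∑ i, g (a' i) - ∑ i, (bernsteinApproximation n g) (a' i)| ≤
        Fintype.card ι * dist (bernsteinApproximation n g) g := by
      rw [← Finset.sum_sub_distrib]
      calc |∑ i, (g (a' i) - (bernsteinApproximation n g) (a' i))|
          ≤ ∑ i, |g (a' i) - (bernsteinApproximation n g) (a' i)| := Finset.abs_sum_le_sum_abs _ _
        _ ≤ ∑ _i : ι, dist (bernsteinApproximation n g) g := by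
            refine Finset.sum_le_sum fun i _ => ?_
            rw [← Real.dist_eq, dist_comm]
            exact ContinuousMap.dist_apply_le_dist _
        _ = Fintype.card ι * dist (bernsteinApproximation n g) g := by
            simp [Finset.sum_const, Finset.card_univ, nsmul_eq_mul]
    have h2 : |∑ j, (bernsteinApproximation n g) (b' j) - ∑ j, g (b' j)| ≤
        Fintype.card ι' * dist (bernsteinApproximation n g) g := by
      rw [← Finset.sum_sub_distrib]
      calc |∑ j, ((bernsteinApproximation n g) (b' j) - g (b' j))|
          ≤ ∑ j, |(bernsteinApproximation n g) (b' j) - g (b' j)| := Finset.abs_sum_le_sum_abs _ _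
        _ ≤ ∑ _j : ι', dist (bernsteinApproximation n g) g := by
            refine Finset.sum_le_sum fun j _ => ?_
            rw [← Real.dist_eq]
            exact ContinuousMap.dist_apply_le_dist _
        _ = Fintype.card ι' * dist (bernsteinApproximation n g) g := by
            simp [Finset.sum_const, Finset.card_univ, nsmul_eq_mul]
    calc |∑ i, f (a i) - ∑ j, f (b j)|
        = |(∑ i, g (a' i) - ∑ i, (bernsteinApproximation n g) (a' i))
            + (∑ j, (bernsteinApproximation n g) (b' j) - ∑ j, g (b' j))| := by
          simp_rw [hga, hgb]
          rw [hbern n]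
          ring_nf
      _ ≤ _ := (abs_add_le _ _).trans (add_le_add h1 h2)
      _ ≤ (Fintype.card ι + Fintype.card ι') * dist (bernsteinApproximation n g) g := by
          rw [add_mul]
  have hto : Filter.Tendsto
      (fun n => (Fintype.card ι + Fintype.card ι' : ℝ) * dist (bernsteinApproximation n g) g)
      Filter.atTop (nhds 0) := by
    have := bernsteinApproximation_uniform g
    have hd : Filter.Tendsto (fun n => dist (bernsteinApproximation n g) g)
        Filter.atTop (nhds 0) := tendsto_iff_dist_tendsto_zero.mp this
    simpa using hd.const_mul (Fintype.card ι + Fintype.card ι' : ℝ)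
  have : |∑ i, f (a i) - ∑ j, f (b j)| ≤ 0 :=
    ge_of_tendsto hto (Filter.Eventually.of_forall hdist)
  have := abs_nonneg (∑ i, f (a i) - ∑ j, f (b j))
  have h0 : |∑ i, f (a i) - ∑ j, f (b j)| = 0 := le_antisymm ‹_› ‹_›
  linarith [abs_eq_zero.mp h0, sub_eq_zero.mp (abs_eq_zero.mp h0)]


end MomentLemma

section EntropyLemmas

variable {n : Type*} [Fintype n] [DecidableEq n]


lemma unitary_conj_pow (U D : Matrix n n ℂ) (hU' : star U * U = 1) (m : ℕ) (hm : 1 ≤ m) :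
    (U * D * star U) ^ m = U * D ^ m * star U := by
  induction m, hm using Nat.le_induction with
  | base => simp [pow_one]
  | succ m hm ih =>
      rw [pow_succ, ih, pow_succ]
      calc U * D ^ m * star U * (U * D * star U)
          = U * D ^ m * (star U * U) * D * star U := by noncomm_ring
        _ = U * (D ^ m * D) * star U := by rw [hU']; noncomm_ring

lemma trace_pow_eq_sum_eigen {A : Matrix n n ℂ} (hA : A.IsHermitian) (m : ℕ) (hm : 1 ≤ m) :
    (A ^ m).trace = ((∑ i, hA.eigenvalues i ^ m : ℝ) : ℂ) := by
  have hU' : (star hA.eigenvectorUnitary.val) * hA.eigenvectorUnitary.val = 1 :=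
    hA.eigenvectorUnitary.2.1
  conv_lhs => rw [hA.spectral_theorem, Unitary.conjStarAlgAut_apply]
  rw [unitary_conj_pow _ _ hU' m hm, trace_mul_cycle, hU', one_mul,
    diagonal_pow, trace_diagonal]
  push_cast
  rfl

lemma entropy_eq_sum {A : Matrix n n ℂ} (hA : A.IsHermitian) :
    entropy A = ∑ i, Real.negMulLog (hA.eigenvalues i) := by
  rw [entropy, dif_pos hA, ← Finset.sum_neg_distrib]
  exact Finset.sum_congr rfl fun i _ => by rw [Real.negMulLog]; ring

lemma posSemidef_sum {K : ℕ} (τ : Fin K → Matrix n n ℂ) (hpsd : ∀ k, (τ k).PosSemidef) :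
    (∑ k, τ k).PosSemidef :=
  Finset.sum_induction τ _ (fun _ _ ha hb => ha.add hb) Matrix.PosSemidef.zero
    (fun k _ => hpsd k)

lemma entropy_sum_orth {K : ℕ} (τ : Fin K → Matrix n n ℂ) (hpsd : ∀ k, (τ k).PosSemidef)
    (horth : ∀ k k', k ≠ k' → τ k * τ k' = 0) :
    entropy (∑ k, τ k) = ∑ k, entropy (τ k) := by
  have hsum : (∑ k, τ k).PosSemidef := posSemidef_sum τ hpsd
  have ppow : ∀ m : ℕ, 1 ≤ m → (∑ k, τ k) ^ m = ∑ k, (τ k) ^ m := by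
    intro m hm
    induction m, hm using Nat.le_induction with
    | base => simp [pow_one]
    | succ m hm ih =>
        rw [pow_succ, ih, Finset.sum_mul]
        refine Finset.sum_congr rfl fun k _ => ?_
        rw [Finset.mul_sum, Finset.sum_eq_single k]
        · rw [← pow_succ]
        · intro j _ hj
          obtain ⟨m', rfl⟩ : ∃ m', m = m' + 1 := ⟨m - 1, (Nat.succ_pred_eq_of_pos hm).symm⟩
          rw [pow_succ, mul_assoc, horth k j (Ne.symm hj), mul_zero]
        · simp
  have hpows : ∀ m : ℕ, 1 ≤ m →
      ∑ i, hsum.1.eigenvalues i ^ m = ∑ p : Fin K × n, ((hpsd p.1).1.eigenvalues p.2) ^ m := by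
    intro m hm
    have h1 := trace_pow_eq_sum_eigen hsum.1 m hm
    have h2 : ((∑ k, τ k) ^ m).trace
        = ((∑ k, ∑ i, ((hpsd k).1.eigenvalues i) ^ m : ℝ) : ℂ) := by
      rw [ppow m hm, trace_sum]
      push_cast
      refine Finset.sum_congr rfl fun k _ => ?_
      rw [trace_pow_eq_sum_eigen (hpsd k).1 m hm]
      push_cast
      rfl
    have h3 := Complex.ofReal_inj.mp (h1.symm.trans h2)
    rw [h3, Fintype.sum_prod_type]
  have key := sum_cont_eq_of_powersum (fun i => hsum.1.eigenvalues i)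
    (fun p : Fin K × n => (hpsd p.1).1.eigenvalues p.2)
    (fun i => hsum.eigenvalues_nonneg i) (fun p => (hpsd p.1).eigenvalues_nonneg p.2)
    hpows Real.negMulLog Real.continuous_negMulLog Real.negMulLog_zero
  rw [entropy_eq_sum hsum.1, key, Fintype.sum_prod_type]
  exact Finset.sum_congr rfl fun k _ => (entropy_eq_sum (hpsd k).1).symm

lemma posSemidef_real_smul {σ : Matrix n n ℂ} (hσ : σ.PosSemidef) {p : ℝ} (hp : 0 ≤ p) :
    (p • σ).PosSemidef := by
  exact hσ.smul hp

lemma entropy_real_smul {σ : Matrix n n ℂ} (hσ : σ.PosSemidef) {p : ℝ} (hp : 0 ≤ p) :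
    entropy (p • σ) = p * entropy σ + Real.negMulLog p * (σ.trace).re := by
  have hps : (p • σ).PosSemidef := posSemidef_real_smul hσ hp
  have htr : ∀ m : ℕ, 1 ≤ m → ((p • σ) ^ m).trace = ((p ^ m * ∑ i, hσ.1.eigenvalues i ^ m : ℝ) : ℂ) := by
    intro m hm
    rw [smul_pow, trace_smul, trace_pow_eq_sum_eigen hσ.1 m hm]
    push_cast [Complex.real_smul]
    ring
  have hpows : ∀ m : ℕ, 1 ≤ m →
      ∑ i, hps.1.eigenvalues i ^ m = ∑ i, (p * hσ.1.eigenvalues i) ^ m := by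
    intro m hm
    have h1 := trace_pow_eq_sum_eigen hps.1 m hm
    rw [htr m hm] at h1
    have : (((∑ i, hps.1.eigenvalues i ^ m : ℝ)) : ℂ) = ((p ^ m * ∑ i, hσ.1.eigenvalues i ^ m : ℝ) : ℂ) := h1.symm
    have := Complex.ofReal_inj.mp this
    rw [this, Finset.mul_sum]
    exact Finset.sum_congr rfl fun i _ => (mul_pow _ _ _).symm
  have key := sum_cont_eq_of_powersum (fun i => hps.1.eigenvalues i)
    (fun i => p * hσ.1.eigenvalues i)
    (fun i => hps.eigenvalues_nonneg i)
    (fun i => mul_nonneg hp (hσ.eigenvalues_nonneg i))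
    hpows Real.negMulLog Real.continuous_negMulLog Real.negMulLog_zero
  have htr1 : (σ.trace).re = ∑ i, hσ.1.eigenvalues i := by
    have := trace_pow_eq_sum_eigen hσ.1 1 le_rfl
    simp only [pow_one] at this
    rw [this, Complex.ofReal_re]
  rw [entropy_eq_sum hps.1, key, entropy_eq_sum hσ.1, htr1]
  rw [Finset.mul_sum, Finset.mul_sum, ← Finset.sum_add_distrib]
  exact Finset.sum_congr rfl fun i _ => by
    rw [Real.negMulLog_mul]; ring


end EntropyLemmas

section PtraceLemmas

variable {X Y : Type*} [Fintype X] [Fintype Y]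


def embL (x : X) : Matrix (X × Y) Y ℂ := fun p y => if p = (x, y) then 1 else 0

def embR (y : Y) : Matrix (X × Y) X ℂ := fun p x => if p = (x, y) then 1 else 0

lemma ptraceLeft_eq_sum_conj (ρ : Matrix (X × Y) (X × Y) ℂ) :
    ptraceLeft ρ = ∑ x : X, (embL (Y := Y) x)ᴴ * ρ * embL (Y := Y) x := by
  ext y y'
  simp [ptraceLeft, Matrix.sum_apply, mul_apply, embL, Fintype.sum_prod_type, apply_ite star]

lemma ptraceRight_eq_sum_conj (ρ : Matrix (X × Y) (X × Y) ℂ) :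
    ptraceRight ρ = ∑ y : Y, (embR (X := X) y)ᴴ * ρ * embR (X := X) y := by
  ext x x'
  simp [ptraceRight, Matrix.sum_apply, mul_apply, embR, Fintype.sum_prod_type, apply_ite star]

lemma posSemidef_ptraceLeft {ρ : Matrix (X × Y) (X × Y) ℂ} (hρ : ρ.PosSemidef) :
    (ptraceLeft ρ).PosSemidef := by
  rw [ptraceLeft_eq_sum_conj]
  exact Finset.sum_induction _ _ (fun _ _ ha hb => ha.add hb) Matrix.PosSemidef.zero
    (fun x _ => hρ.conjTranspose_mul_mul_same _)

lemma posSemidef_ptraceRight {ρ : Matrix (X × Y) (X × Y) ℂ} (hρ : ρ.PosSemidef) :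
    (ptraceRight ρ).PosSemidef := by
  rw [ptraceRight_eq_sum_conj]
  exact Finset.sum_induction _ _ (fun _ _ ha hb => ha.add hb) Matrix.PosSemidef.zero
    (fun y _ => hρ.conjTranspose_mul_mul_same _)

lemma trace_ptraceLeft (ρ : Matrix (X × Y) (X × Y) ℂ) :
    (ptraceLeft ρ).trace = ρ.trace := by
  simp only [Matrix.trace, Matrix.diag, ptraceLeft, Fintype.sum_prod_type]
  rw [Finset.sum_comm]

lemma trace_ptraceRight (ρ : Matrix (X × Y) (X × Y) ℂ) :
    (ptraceRight ρ).trace = ρ.trace := by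
  simp only [Matrix.trace, Matrix.diag, ptraceRight, Fintype.sum_prod_type]


end PtraceLemmas

section FroLemmas

/-- The Frobenius square norm. -/
def fro {α β : Type*} [Fintype α] [Fintype β] (M : Matrix α β ℂ) : ℝ :=
  ∑ i, ∑ j, Complex.normSq (M i j)

lemma sum_comm3 {α β γ M : Type*} [Fintype α] [Fintype β] [Fintype γ] [AddCommMonoid M]
    (f : α → β → γ → M) :
    ∑ a, ∑ b, ∑ c, f a b c = ∑ c, ∑ a, ∑ b, f a b c :=
  calc ∑ a, ∑ b, ∑ c, f a b c
      = ∑ a, ∑ c, ∑ b, f a b c := Finset.sum_congr rfl (fun _ _ => Finset.sum_comm)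
    _ = ∑ c, ∑ a, ∑ b, f a b c := Finset.sum_comm

variable {α β X Y : Type*} [Fintype α] [Fintype β] [Fintype X] [Fintype Y]


lemma fro_nonneg (M : Matrix α β ℂ) : 0 ≤ fro M :=
  Finset.sum_nonneg fun i _ => Finset.sum_nonneg fun j _ => Complex.normSq_nonneg _

lemma eq_zero_of_fro_eq_zero {M : Matrix α β ℂ} (h : fro M ≤ 0) : M = 0 := by
  have h0 : fro M = 0 := le_antisymm h (fro_nonneg M)
  ext i j
  have h1 : ∀ i ∈ Finset.univ, (0:ℝ) ≤ ∑ j, Complex.normSq (M i j) :=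
    fun i _ => Finset.sum_nonneg fun j _ => Complex.normSq_nonneg _
  have h2 := (Finset.sum_eq_zero_iff_of_nonneg h1).mp h0 i (Finset.mem_univ i)
  have h3 := (Finset.sum_eq_zero_iff_of_nonneg
    (fun j _ => Complex.normSq_nonneg (M i j))).mp h2 j (Finset.mem_univ j)
  simpa using Complex.normSq_eq_zero.mp h3

lemma trace_conjTranspose_mul_eq_fro (M : Matrix α β ℂ) :
    (Mᴴ * M).trace = (fro M : ℂ) := by
  simp only [Matrix.trace, Matrix.diag, mul_apply, conjTranspose_apply, fro]
  push_cast
  rw [Finset.sum_comm]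
  refine Finset.sum_congr rfl fun i _ => Finset.sum_congr rfl fun j _ => ?_
  rw [show star (M i j) = (starRingEnd ℂ) (M i j) from rfl, Complex.conj_mul']
  rw [← Complex.sq_norm]
  push_cast
  ring

lemma fro_sum_le (M : X → Matrix α β ℂ) :
    fro (∑ x, M x) ≤ Fintype.card X * ∑ x, fro (M x) := by
  have hentry : ∀ (i : α) (j : β),
      Complex.normSq ((∑ x, M x) i j) ≤ Fintype.card X * ∑ x, Complex.normSq (M x i j) := by
    intro i j
    have h1 : (∑ x, M x) i j = ∑ x, M x i j := by simp [Matrix.sum_apply]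
    rw [h1, ← Complex.sq_norm]
    calc ‖∑ x, M x i j‖ ^ 2
        ≤ (∑ x, ‖M x i j‖) ^ 2 := by
          have := norm_sum_le (Finset.univ) (fun x => M x i j) (E := ℂ)
          have habs : ‖∑ x, M x i j‖ ≤ ∑ x, ‖M x i j‖ := this
          exact pow_le_pow_left₀ (norm_nonneg _) habs 2
      _ ≤ Fintype.card X * ∑ x, ‖M x i j‖ ^ 2 := by
          simpa [Finset.card_univ] using
            sq_sum_le_card_mul_sum_sq (s := Finset.univ) (f := fun x => ‖M x i j‖)
      _ = Fintype.card X * ∑ x, Complex.normSq (M x i j) := by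
          simp [Complex.sq_norm]
  calc fro (∑ x, M x) ≤ ∑ i, ∑ j, (Fintype.card X * ∑ x, Complex.normSq (M x i j)) :=
        Finset.sum_le_sum fun i _ => Finset.sum_le_sum fun j _ => hentry i j
    _ = Fintype.card X * ∑ x, fro (M x) := by
        simp only [fro, ← Finset.mul_sum]
        congr 1
        calc ∑ i : α, ∑ j : β, ∑ x : X, Complex.normSq (M x i j)
            = ∑ i : α, ∑ x : X, ∑ j : β, Complex.normSq (M x i j) :=
              Finset.sum_congr rfl fun i _ => Finset.sum_comm
          _ = ∑ x : X, ∑ i : α, ∑ j : β, Complex.normSq (M x i j) :=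
              Finset.sum_comm

/-- The block of columns of `S` corresponding to a fixed `x`. -/
def blk (S : Matrix α (X × Y) ℂ) (x : X) : Matrix α Y ℂ :=
  S.submatrix id (Prod.mk x)

lemma sum_blk_conj (S : Matrix (X × Y) (X × Y) ℂ) :
    ∑ x, (blk S x)ᴴ * blk S x = ptraceLeft (Sᴴ * S) := by
  ext y y'
  simp only [Matrix.sum_apply, mul_apply, conjTranspose_apply, blk, submatrix_apply, id_eq,
    ptraceLeft]

lemma mul_conj_eq_sum_blk (S T : Matrix (X × Y) (X × Y) ℂ) :
    S * Tᴴ = ∑ x, blk S x * (blk T x)ᴴ := by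
  ext n m
  simp only [Matrix.sum_apply, mul_apply, conjTranspose_apply, blk, submatrix_apply, id_eq,
    Fintype.sum_prod_type]

lemma fro_blk_total (S T : Matrix (X × Y) (X × Y) ℂ) :
    ((∑ x, ∑ x', fro (blk S x' * (blk T x)ᴴ) : ℝ) : ℂ)
      = (ptraceLeft (Tᴴ * T) * ptraceLeft (Sᴴ * S)).trace := by
  push_cast
  have hsingle : ∀ (x x' : X), ((fro (blk S x' * (blk T x)ᴴ) : ℝ) : ℂ)
      = (((blk T x)ᴴ * blk T x) * ((blk S x')ᴴ * blk S x')).trace := by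
    intro x x'
    rw [← trace_conjTranspose_mul_eq_fro]
    have : (blk S x' * (blk T x)ᴴ)ᴴ * (blk S x' * (blk T x)ᴴ)
        = blk T x * ((blk S x')ᴴ * blk S x') * (blk T x)ᴴ := by
      rw [conjTranspose_mul, conjTranspose_conjTranspose]
      simp only [Matrix.mul_assoc]
    rw [this, trace_mul_cycle]
  calc ∑ x, ∑ x', (((fro (blk S x' * (blk T x)ᴴ) : ℝ)) : ℂ)
      = ∑ x, (((blk T x)ᴴ * blk T x) * (∑ x', (blk S x')ᴴ * blk S x')).trace := by
        refine Finset.sum_congr rfl fun x _ => ?_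
        rw [Finset.mul_sum, trace_sum]
        exact Finset.sum_congr rfl fun x' _ => hsingle x x'
    _ = ((∑ x, (blk T x)ᴴ * blk T x) * (∑ x', (blk S x')ᴴ * blk S x')).trace := by
        rw [Finset.sum_mul, trace_sum]
    _ = (ptraceLeft (Tᴴ * T) * ptraceLeft (Sᴴ * S)).trace := by
        rw [sum_blk_conj, sum_blk_conj]

lemma psd_eq_conjTranspose_mul_self {m : Type*} [Fintype m] {A : Matrix m m ℂ}
    (hA : A.PosSemidef) : ∃ B : Matrix m m ℂ, A = Bᴴ * B := by
  open MatrixOrder in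
  obtain ⟨X, hX, -, rfl⟩ :=
    CFC.exists_sqrt_of_isSelfAdjoint_of_quasispectrumRestricts hA.isHermitian
      (QuasispectrumRestricts.nnreal_of_nonneg hA.nonneg)
  exact ⟨X, by rw [← star_eq_conjTranspose, hX.star_eq]⟩

/-- Orthogonality of the right marginals implies orthogonality of the states. -/
lemma mul_eq_zero_of_ptraceLeft_mul_eq_zero {σ τ : Matrix (X × Y) (X × Y) ℂ}
    (hσ : σ.PosSemidef) (hτ : τ.PosSemidef)
    (h : ptraceLeft σ * ptraceLeft τ = 0) : σ * τ = 0 := by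
  obtain ⟨S, rfl⟩ := psd_eq_conjTranspose_mul_self hσ
  obtain ⟨T, rfl⟩ := psd_eq_conjTranspose_mul_self hτ
  have h' : ptraceLeft (Tᴴ * T) * ptraceLeft (Sᴴ * S) = 0 := by
    have h1 : (ptraceLeft (Sᴴ * S) * ptraceLeft (Tᴴ * T))ᴴ = 0 := by rw [h]; simp
    rw [conjTranspose_mul] at h1
    rwa [(posSemidef_ptraceLeft (posSemidef_conjTranspose_mul_self T)).1.eq,
      (posSemidef_ptraceLeft (posSemidef_conjTranspose_mul_self S)).1.eq] at h1
  have htot : (∑ x, ∑ x', fro (blk S x' * (blk T x)ᴴ) : ℝ) = 0 := by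
    have := fro_blk_total S T
    rw [h'] at this
    simpa using Complex.ofReal_inj.mp (by simpa using this)
  have hST : S * Tᴴ = 0 := by
    apply eq_zero_of_fro_eq_zero
    calc fro (S * Tᴴ) = fro (∑ x, blk S x * (blk T x)ᴴ) := by rw [mul_conj_eq_sum_blk]
      _ ≤ Fintype.card X * ∑ x, fro (blk S x * (blk T x)ᴴ) := fro_sum_le _
      _ ≤ Fintype.card X * ∑ x, ∑ x', fro (blk S x' * (blk T x)ᴴ) := by
          refine mul_le_mul_of_nonneg_left (Finset.sum_le_sum fun x _ => ?_) (by positivity)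
          exact Finset.single_le_sum (f := fun x' => fro (blk S x' * (blk T x)ᴴ))
            (fun x' _ => fro_nonneg _) (Finset.mem_univ x)
      _ = 0 := by rw [htot, mul_zero]
  calc Sᴴ * S * (Tᴴ * T) = Sᴴ * (S * Tᴴ) * T := by noncomm_ring
    _ = 0 := by rw [hST]; simp


end FroLemmas

section MixLemma

lemma entropy_mix {n : Type*} [Fintype n] [DecidableEq n] {K : ℕ}
    (p : Fin K → ℝ) (σ : Fin K → Matrix n n ℂ)
    (hp : ∀ k, 0 ≤ p k) (hpsd : ∀ k, (σ k).PosSemidef) (htr : ∀ k, (σ k).trace = 1)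
    (horth : ∀ k k', k ≠ k' → σ k * σ k' = 0) :
    entropy (∑ k, p k • σ k) = ∑ k, (p k * entropy (σ k) + Real.negMulLog (p k)) := by
  rw [entropy_sum_orth (fun k => p k • σ k)
    (fun k => posSemidef_real_smul (hpsd k) (hp k))
    (fun k k' hkk' => by
      rw [smul_mul_smul_comm, horth k k' hkk', smul_zero])]
  refine Finset.sum_congr rfl fun k _ => ?_
  rw [entropy_real_smul (hpsd k) (hp k), htr k]
  simp

end MixLemma

section MargLemmas

variable {A B C : Type*} [Fintype A] [Fintype B] [Fintype C]

/-- Reordering equivalence used for the `AB` marginal. -/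
def eqAB : (A × B) × C ≃ A × B × C := Equiv.prodAssoc A B C

/-- Reordering equivalence used for the `AC` marginal. -/
def eqAC : (A × C) × B ≃ A × B × C where
  toFun p := (p.1.1, p.2, p.1.2)
  invFun q := ((q.1, q.2.2), q.2.1)
  left_inv := by rintro ⟨⟨a, c⟩, b⟩; rfl
  right_inv := by rintro ⟨a, b, c⟩; rfl

variable (ρ : Matrix (A × B × C) (A × B × C) ℂ)

lemma margAB_eq : margAB ρ = ptraceRight (ρ.submatrix (eqAB (A := A)) eqAB) := rfl

lemma margAC_eq : margAC ρ = ptraceRight (ρ.submatrix (eqAC (A := A)) eqAC) := rfl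

lemma margB_eq : margB ρ = ptraceLeft (margAB ρ) := by
  ext b b'
  simp [margB, margAB, ptraceLeft]

lemma margC_eq : margC ρ = ptraceLeft (margAC ρ) := by
  ext c c'
  simp [margC, margAC, ptraceLeft]

lemma trace_submatrix_equiv {α β : Type*} [Fintype α] [Fintype β] (e : α ≃ β)
    (M : Matrix β β ℂ) : (M.submatrix e e).trace = M.trace := by
  simp only [Matrix.trace, Matrix.diag, submatrix_apply]
  exact Equiv.sum_comp e (fun q => M q q)

lemma posSemidef_margAB (h : ρ.PosSemidef) : (margAB ρ).PosSemidef := by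
  rw [margAB_eq]; exact posSemidef_ptraceRight (h.submatrix _)

lemma posSemidef_margAC (h : ρ.PosSemidef) : (margAC ρ).PosSemidef := by
  rw [margAC_eq]; exact posSemidef_ptraceRight (h.submatrix _)

lemma posSemidef_margB (h : ρ.PosSemidef) : (margB ρ).PosSemidef := by
  rw [margB_eq]; exact posSemidef_ptraceLeft (posSemidef_margAB ρ h)

lemma posSemidef_margC (h : ρ.PosSemidef) : (margC ρ).PosSemidef := by
  rw [margC_eq]; exact posSemidef_ptraceLeft (posSemidef_margAC ρ h)

lemma trace_margAB : (margAB ρ).trace = ρ.trace := by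
  rw [margAB_eq, trace_ptraceRight, trace_submatrix_equiv]

lemma trace_margAC : (margAC ρ).trace = ρ.trace := by
  rw [margAC_eq, trace_ptraceRight, trace_submatrix_equiv]

lemma trace_margB : (margB ρ).trace = ρ.trace := by
  rw [margB_eq, trace_ptraceLeft, trace_margAB]

lemma trace_margC : (margC ρ).trace = ρ.trace := by
  rw [margC_eq, trace_ptraceLeft, trace_margAC]

variable {K : ℕ} (p : Fin K → ℝ) (ρs : Fin K → Matrix (A × B × C) (A × B × C) ℂ)

lemma margAB_sum : margAB (∑ k, p k • ρs k) = ∑ k, p k • margAB (ρs k) := by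
  ext x y
  simp only [margAB, Matrix.sum_apply, Matrix.smul_apply, Finset.smul_sum]
  exact Finset.sum_comm

lemma margAC_sum : margAC (∑ k, p k • ρs k) = ∑ k, p k • margAC (ρs k) := by
  ext x y
  simp only [margAC, Matrix.sum_apply, Matrix.smul_apply, Finset.smul_sum]
  exact Finset.sum_comm

lemma margB_sum : margB (∑ k, p k • ρs k) = ∑ k, p k • margB (ρs k) := by
  ext x y
  simp only [margB, Matrix.sum_apply, Matrix.smul_apply, Finset.smul_sum]
  exact sum_comm3 _

lemma margC_sum : margC (∑ k, p k • ρs k) = ∑ k, p k • margC (ρs k) := by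
  ext x y
  simp only [margC, Matrix.sum_apply, Matrix.smul_apply, Finset.smul_sum]
  exact sum_comm3 _

end MargLemmas

/-- an ensemble `{pₖ, ρᵏ_ABC}` of states with `T^(a)(ρᵏ_ABC) = 0`
for all `k`, whose `B`-marginals are mutually orthogonal and whose
`C`-marginals are mutually orthogonal, generates a state
`ρ_ABC = ∑ₖ pₖ ρᵏ_ABC` with `T^(a)(ρ_ABC) = 0`. -/
theorem Ta_eq_zero_of_mix {A B C : Type*}
    [Fintype A] [Fintype B] [Fintype C]
    [DecidableEq A] [DecidableEq B] [DecidableEq C]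
    (K : ℕ) (p : Fin K → ℝ) (ρs : Fin K → Matrix (A × B × C) (A × B × C) ℂ)
    (hp : ∀ k, 0 ≤ p k) (hp1 : ∑ k, p k = 1)
    (hs : ∀ k, IsState (ρs k)) (hT : ∀ k, Ta (ρs k) = 0)
    (horthB : ∀ k k', k ≠ k' → margB (ρs k) * margB (ρs k') = 0)
    (horthC : ∀ k k', k ≠ k' → margC (ρs k) * margC (ρs k') = 0) :
    Ta (∑ k, p k • ρs k) = 0 := by
  have hABk : ∀ k, (margAB (ρs k)).PosSemidef := fun k => posSemidef_margAB _ (hs k).1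
  have hACk : ∀ k, (margAC (ρs k)).PosSemidef := fun k => posSemidef_margAC _ (hs k).1
  have hBk : ∀ k, (margB (ρs k)).PosSemidef := fun k => posSemidef_margB _ (hs k).1
  have hCk : ∀ k, (margC (ρs k)).PosSemidef := fun k => posSemidef_margC _ (hs k).1
  have horthAB : ∀ k k', k ≠ k' → margAB (ρs k) * margAB (ρs k') = 0 := by
    intro k k' h
    refine mul_eq_zero_of_ptraceLeft_mul_eq_zero (hABk k) (hABk k') ?_
    rw [← margB_eq, ← margB_eq]
    exact horthB k k' h
  have horthAC : ∀ k k', k ≠ k' → margAC (ρs k) * margAC (ρs k') = 0 := by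
    intro k k' h
    refine mul_eq_zero_of_ptraceLeft_mul_eq_zero (hACk k) (hACk k') ?_
    rw [← margC_eq, ← margC_eq]
    exact horthC k k' h
  have eAB : entropy (margAB (∑ k, p k • ρs k))
      = ∑ k, (p k * entropy (margAB (ρs k)) + Real.negMulLog (p k)) := by
    rw [margAB_sum]
    exact entropy_mix p _ hp hABk (fun k => by rw [trace_margAB]; exact (hs k).2) horthAB
  have eAC : entropy (margAC (∑ k, p k • ρs k))
      = ∑ k, (p k * entropy (margAC (ρs k)) + Real.negMulLog (p k)) := by
    rw [margAC_sum]
    exact entropy_mix p _ hp hACk (fun k => by rw [trace_margAC]; exact (hs k).2) horthAC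
  have eB : entropy (margB (∑ k, p k • ρs k))
      = ∑ k, (p k * entropy (margB (ρs k)) + Real.negMulLog (p k)) := by
    rw [margB_sum]
    exact entropy_mix p _ hp hBk (fun k => by rw [trace_margB]; exact (hs k).2) horthB
  have eC : entropy (margC (∑ k, p k • ρs k))
      = ∑ k, (p k * entropy (margC (ρs k)) + Real.negMulLog (p k)) := by
    rw [margC_sum]
    exact entropy_mix p _ hp hCk (fun k => by rw [trace_margC]; exact (hs k).2) horthC
  rw [Ta, eAB, eAC, eB, eC, ← Finset.sum_add_distrib, ← Finset.sum_sub_distrib,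
    ← Finset.sum_sub_distrib]
  refine Finset.sum_eq_zero fun k _ => ?_
  have h := hT k
  rw [Ta] at h
  linear_combination p k * h

end
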